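/- Let G be a topological group and A a profinite G-group (a compact Hausdorff totally disconnected G-group). Suppose given a family {N_r}_{r∈R}, indexed by a directed poset R, of closed characteristic subgroups of A (subgroups invariant under every continuous automorphism of A) such that ∩_{r∈R} N_r = {1} and N_r ⊆ N_t whenever r ≥ t, and set A_r = A/N_r with the quotient topology and the induced G-action. Then each A_r is a profinite G-group, the natural map A → lim_r A_r is an isomorphism of topological groups commuting with the G-actions, and the induced map Θ : H¹_cts(G,A)_po → lim_r H¹_cts(G,A_r)_po, [a] ↦ ([φ_r ∘ a])_r (where φ_r : A → A_r is the quotient map), is a continuous bijection; if moreover G is a compact Hausdorff space and A is evenly continuous with respect to G, then Θ is a homeomorphism. -/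

import Mathlib

/-- A set `F` of maps `B → A` is evenly continuous. -/
def EvenlyContinuousSet {B A : Type} [TopologicalSpace B] [TopologicalSpace A]
    (F : Set (B → A)) : Prop :=
  ∀ b : B, ∀ a : A, ∀ U ∈ nhds a, ∃ V ∈ nhds b, ∃ W ∈ nhds a,
    ∀ f ∈ F, f b ∈ W → ∀ v ∈ V, f v ∈ U

/-- `Z¹_cts(G,A)_po`: continuous 1-cocycles with the point-open topology. -/
abbrev Z1cts {G A : Type} [Group G] [TopologicalSpace G] [Group A] [TopologicalSpace A]
    (ac : G → A → A) : Type :=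
  {a : G → A // Continuous a ∧ ∀ s t : G, a (s * t) = a s * ac s (a t)}

/-- The cohomology relation on `Z¹_cts(G,A)_po`. -/
def Cohomologous {G A : Type} [Group G] [TopologicalSpace G] [Group A]
    [TopologicalSpace A] (ac : G → A → A) (a b : Z1cts ac) : Prop :=
  ∃ x : A, ∀ s : G, b.val s = x⁻¹ * a.val s * ac s x

/-- Continuous 1-cocycles with values in a (quotient) space `Q` equipped with a
multiplication `mulq` and a `G`-action `acq`. -/
abbrev Z1q {G : Type} [Group G] [TopologicalSpace G] {Q : Type} [TopologicalSpace Q]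
    (mulq : Q → Q → Q) (acq : G → Q → Q) : Type :=
  {b : G → Q // Continuous b ∧ ∀ s t : G, b (s * t) = mulq (b s) (acq s (b t))}

/-- The cohomology relation on `Z1q`. -/
def Cohq {G : Type} [Group G] [TopologicalSpace G] {Q : Type} [TopologicalSpace Q]
    (mulq : Q → Q → Q) (invq : Q → Q) (acq : G → Q → Q) (b b' : Z1q mulq acq) :
    Prop :=
  ∃ x : Q, ∀ s : G, b'.val s = mulq (invq x) (mulq (b.val s) (acq s x))

set_option linter.unusedSectionVars false
set_option linter.unusedVariables false
set_option maxHeartbeats 1000000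

open Pointwise

namespace Stmt13

variable {G : Type} [Group G] [TopologicalSpace G] [IsTopologicalGroup G]
variable {A : Type} [Group A] [TopologicalSpace A] [IsTopologicalGroup A]



/-- `ac s` as a monoid hom. -/
def acHom (ac : G → A → A) (hdist : ∀ (s : G) (x y : A), ac s (x * y) = ac s x * ac s y)
    (s : G) : A →* A where
  toFun := ac s
  map_one' := by
    have h := hdist s 1 1
    rw [one_mul] at h
    exact mul_left_cancel (h.symm.trans (mul_one _).symm)
  map_mul' := hdist s

theorem acOne (ac : G → A → A) (hdist : ∀ (s : G) (x y : A), ac s (x * y) = ac s x * ac s y)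
    (s : G) : ac s 1 = 1 := (acHom ac hdist s).map_one

theorem acInv (ac : G → A → A) (hdist : ∀ (s : G) (x y : A), ac s (x * y) = ac s x * ac s y)
    (s : G) (x : A) : ac s x⁻¹ = (ac s x)⁻¹ := (acHom ac hdist s).map_inv x

theorem acContR (ac : G → A → A) (hac : Continuous fun p : G × A => ac p.1 p.2) (s : G) :
    Continuous (ac s) := hac.comp (continuous_const.prodMk continuous_id)

theorem acContL (ac : G → A → A) (hac : Continuous fun p : G × A => ac p.1 p.2) (x : A) :
    Continuous (fun s => ac s x) := hac.comp (continuous_id.prodMk continuous_const)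

/-- `ac s` as a mul equiv. -/
def acEquiv (ac : G → A → A) (hdist : ∀ (s : G) (x y : A), ac s (x * y) = ac s x * ac s y)
    (hone : ∀ x : A, ac 1 x = x)
    (hcomp : ∀ (s t : G) (x : A), ac (s * t) x = ac s (ac t x)) (s : G) : A ≃* A :=
  { acHom ac hdist s with
    invFun := ac s⁻¹
    left_inv := fun x => by
      show ac s⁻¹ (ac s x) = x
      rw [← hcomp, inv_mul_cancel, hone]
    right_inv := fun x => by
      show ac s (ac s⁻¹ x) = x
      rw [← hcomp, mul_inv_cancel, hone] }

theorem normal_of_char {M : Subgroup A}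
    (hchar : ∀ ψ : A ≃* A, Continuous ψ → Continuous ψ.symm → ∀ x ∈ M, ψ x ∈ M) :
    M.Normal := by
  constructor
  intro n hn g
  have hc : Continuous ⇑(MulAut.conj g) := by
    have : ⇑(MulAut.conj g) = fun x => g * x * g⁻¹ := funext fun x => MulAut.conj_apply g x
    rw [this]; fun_prop
  have hc' : Continuous ⇑(MulAut.conj g).symm := by
    have : ⇑(MulAut.conj g).symm = fun x => g⁻¹ * x * g := funext fun x => by
      simp [MulAut.conj_symm_apply]
    rw [this]; fun_prop
  have := hchar (MulAut.conj g) hc hc' n hn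
  simpa using this

theorem mem_of_char {M : Subgroup A} (ac : G → A → A)
    (hac : Continuous fun p : G × A => ac p.1 p.2)
    (hdist : ∀ (s : G) (x y : A), ac s (x * y) = ac s x * ac s y)
    (hone : ∀ x : A, ac 1 x = x)
    (hcomp : ∀ (s t : G) (x : A), ac (s * t) x = ac s (ac t x))
    (hchar : ∀ ψ : A ≃* A, Continuous ψ → Continuous ψ.symm → ∀ x ∈ M, ψ x ∈ M)
    (s : G) (x : A) (hx : x ∈ M) : ac s x ∈ M :=
  hchar (acEquiv ac hdist hone hcomp s) (acContR ac hac s) (acContR ac hac s⁻¹) x hx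





/-- The induced action on the quotient. -/
def qac (M : Subgroup A) [M.Normal] (ac : G → A → A)
    (hdist : ∀ (s : G) (x y : A), ac s (x * y) = ac s x * ac s y)
    (hmem : ∀ (s : G), ∀ x ∈ M, ac s x ∈ M) (s : G) : A ⧸ M →* A ⧸ M :=
  QuotientGroup.map M M
    { toFun := ac s
      map_one' := by
        have h := hdist s 1 1
        rw [one_mul] at h
        exact mul_left_cancel (h.symm.trans (mul_one _).symm)
      map_mul' := hdist s }
    (fun x hx => hmem s x hx)

theorem qac_mk (M : Subgroup A) [M.Normal] (ac : G → A → A)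
    (hdist : ∀ (s : G) (x y : A), ac s (x * y) = ac s x * ac s y)
    (hmem : ∀ (s : G), ∀ x ∈ M, ac s x ∈ M) (s : G) (x : A) :
    qac M ac hdist hmem s (QuotientGroup.mk x) = QuotientGroup.mk (ac s x) :=
  QuotientGroup.map_mk M M _ _ x

theorem qac_cont (M : Subgroup A) [M.Normal] (ac : G → A → A)
    (hac : Continuous fun p : G × A => ac p.1 p.2)
    (hdist : ∀ (s : G) (x y : A), ac s (x * y) = ac s x * ac s y)
    (hmem : ∀ (s : G), ∀ x ∈ M, ac s x ∈ M) :
    Continuous (fun p : G × (A ⧸ M) => qac M ac hdist hmem p.1 p.2) := by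
  have hq : Topology.IsQuotientMap (Prod.map (id : G → G) (QuotientGroup.mk : A → A ⧸ M)) := by
    refine IsOpenMap.isQuotientMap ?_ ?_ ?_
    · exact IsOpenMap.prodMap IsOpenMap.id QuotientGroup.isOpenMap_coe
    · exact continuous_id.prodMap continuous_quot_mk
    · exact Function.Surjective.prodMap Function.surjective_id
        (QuotientGroup.mk_surjective)
  rw [hq.continuous_iff]
  have : (fun p : G × (A ⧸ M) => qac M ac hdist hmem p.1 p.2) ∘
      (Prod.map (id : G → G) (QuotientGroup.mk : A → A ⧸ M)) =
      fun p : G × A => QuotientGroup.mk (ac p.1 p.2) := by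
    funext p
    exact qac_mk M ac hdist hmem p.1 p.2
  rw [this]
  exact continuous_quot_mk.comp hac

theorem quotT2 (M : Subgroup A) [M.Normal] (hM : IsClosed (M : Set A)) :
    T2Space (A ⧸ M) := by
  haveI := hM
  infer_instance

theorem quotTotSep [CompactSpace A] [T2Space A] [TotallyDisconnectedSpace A]
    (M : Subgroup A) [M.Normal] (hM : IsClosed (M : Set A)) :
    TotallySeparatedSpace (A ⧸ M) := by
  haveI := quotT2 M hM
  have hmkc : Continuous (QuotientGroup.mk : A → A ⧸ M) := continuous_quot_mk
  constructor
  intro x _ y _ hne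
  obtain ⟨a, rfl⟩ := QuotientGroup.mk_surjective x
  obtain ⟨b, rfl⟩ := QuotientGroup.mk_surjective y
  have hc : a⁻¹ * b ∉ M := fun h => hne (QuotientGroup.eq.mpr h)
  set c := a⁻¹ * b with hcdef
  have hS : IsClosed ((fun z => c⁻¹ * z) ⁻¹' (M : Set A)) :=
    hM.preimage (continuous_const.mul continuous_id)
  have h1S : (1 : A) ∈ ((fun z => c⁻¹ * z) ⁻¹' (M : Set A))ᶜ := by
    intro h
    simp only [Set.mem_preimage, mul_one, SetLike.mem_coe] at h
    exact hc (by simpa using (inv_mem_iff).mp h)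
  obtain ⟨W, hWclopen, h1W, hWsub⟩ :=
    compact_exists_isClopen_in_isOpen hS.isOpen_compl h1S
  obtain ⟨H, hHW⟩ :=
    IsTopologicalGroup.exist_openNormalSubgroup_sub_clopen_nhds_of_one hWclopen h1W
  have hHopen : IsOpen (H.toSubgroup : Set A) := H.toOpenSubgroup.isOpen
  have hHclosed : IsClosed (H.toSubgroup : Set A) := H.toOpenSubgroup.isClosed
  set U0 : Set A := ({a} : Set A) * (H.toSubgroup : Set A) * (M : Set A) with hU0
  have hU0open : IsOpen U0 := IsOpen.mul_right (IsOpen.mul_left hHopen)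
  have hU0compact : IsCompact U0 :=
    ((isCompact_singleton.mul hHclosed.isCompact).mul hM.isCompact)
  have haU0 : a ∈ U0 := by
    refine ⟨a * 1, ⟨a, rfl, 1, H.toSubgroup.one_mem, mul_one a ▸ rfl⟩, 1, M.one_mem, by simp⟩
  have hbU0 : b ∉ U0 := by
    rintro ⟨w, ⟨a', ha', h, hh, rfl⟩, m, hm, rfl⟩
    rw [Set.mem_singleton_iff] at ha'
    subst ha'
    have : h = c * m⁻¹ := by
      rw [hcdef]
      group
    have hhS : h ∈ (fun z => c⁻¹ * z) ⁻¹' (M : Set A) := by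
      simp only [Set.mem_preimage, SetLike.mem_coe, this]
      simpa using (inv_mem hm)
    exact (hWsub (hHW hh)) hhS
  have hsat : ∀ z ∈ U0, ∀ m ∈ M, z * m ∈ U0 := by
    rintro z ⟨w, hw, m0, hm0, rfl⟩ m hm
    exact ⟨w, hw, m0 * m, M.mul_mem hm0 hm, (mul_assoc _ _ _).symm⟩
  refine ⟨QuotientGroup.mk '' U0, (QuotientGroup.mk '' U0)ᶜ,
    QuotientGroup.isOpenMap_coe U0 hU0open, ?_, ⟨a, haU0, rfl⟩, ?_, ?_, ?_⟩
  · rw [isOpen_compl_iff]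
    exact (hU0compact.image hmkc).isClosed
  · rintro ⟨z, hz, hzb⟩
    have : z⁻¹ * b ∈ M := QuotientGroup.eq.mp hzb
    have : b ∈ U0 := by
      have := hsat z hz _ this
      simpa using this
    exact hbU0 this
  · intro z _
    by_cases h : z ∈ QuotientGroup.mk '' U0
    · exact Or.inl h
    · exact Or.inr h
  · exact disjoint_compl_right




/-- Key compactness lemma: a directed family of nonempty closed sets has
nonempty intersection. -/
theorem iInterNonempty {X : Type} [TopologicalSpace X] [CompactSpace X] [Nonempty X]
    {R : Type} [PartialOrder R] [IsDirected R (· ≤ ·)]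
    (C : R → Set X) (hcl : ∀ r, IsClosed (C r)) (hne : ∀ r, (C r).Nonempty)
    (hmono : ∀ (r t : R), t ≤ r → C r ⊆ C t) : (⋂ r, C r).Nonempty := by
  rcases isEmpty_or_nonempty R with hR | hR
  · rw [Set.iInter_of_empty]
    exact Set.univ_nonempty
  · refine IsCompact.nonempty_iInter_of_directed_nonempty_isCompact_isClosed C ?_ hne
      (fun r => (hcl r).isCompact) hcl
    intro r t
    obtain ⟨u, hru, htu⟩ := directed_of (· ≤ ·) r t
    exact ⟨u, hmono u r hru, hmono u t htu⟩

/-- The trivial cocycle. -/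
def onecoc (ac : G → A → A)
    (hdist : ∀ (s : G) (x y : A), ac s (x * y) = ac s x * ac s y) : Z1cts ac :=
  ⟨fun _ => 1, continuous_const, fun s t => by
    have h := hdist s 1 1
    rw [one_mul] at h
    have : ac s 1 = 1 := mul_left_cancel (h.symm.trans (mul_one _).symm)
    rw [this, mul_one]⟩

/-- Twisting a cocycle by an element of `A`. -/
def twist (ac : G → A → A) (hac : Continuous fun p : G × A => ac p.1 p.2)
    (hdist : ∀ (s : G) (x y : A), ac s (x * y) = ac s x * ac s y)
    (hcomp : ∀ (s t : G) (x : A), ac (s * t) x = ac s (ac t x))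
    (a : Z1cts ac) (x : A) : Z1cts ac := by
  refine ⟨fun s => x⁻¹ * a.val s * ac s x, ?_, ?_⟩
  · have h1 : Continuous (fun s => ac s x) :=
      hac.comp (continuous_id.prodMk continuous_const)
    exact (continuous_const.mul a.2.1).mul h1
  · intro s t
    have hx1 : ∀ (s : G) (y : A), ac s y⁻¹ = (ac s y)⁻¹ := by
      intro s y
      have h := hdist s 1 1
      rw [one_mul] at h
      have h1 : ac s 1 = 1 := mul_left_cancel (h.symm.trans (mul_one _).symm)
      have h2 := hdist s y y⁻¹
      rw [mul_inv_cancel, h1] at h2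
      exact eq_inv_of_mul_eq_one_right h2.symm
    show x⁻¹ * a.val (s * t) * ac (s * t) x =
        (x⁻¹ * a.val s * ac s x) * ac s (x⁻¹ * a.val t * ac t x)
    rw [a.2.2 s t, hcomp s t x, hdist s (x⁻¹ * a.val t) (ac t x),
      hdist s x⁻¹ (a.val t), hx1 s x]
    group

theorem twist_cohomologous (ac : G → A → A) (hac : Continuous fun p : G × A => ac p.1 p.2)
    (hdist : ∀ (s : G) (x y : A), ac s (x * y) = ac s x * ac s y)
    (hcomp : ∀ (s t : G) (x : A), ac (s * t) x = ac s (ac t x))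
    (a : Z1cts ac) (x : A) : Cohomologous ac a (twist ac hac hdist hcomp a x) :=
  ⟨x, fun _ => rfl⟩

/-- `Cohq` for a group-valued target with a `G`-action by monoid homs is an
equivalence relation. -/
theorem cohq_equivalence {Q : Type} [Group Q] [TopologicalSpace Q] (aq : G → Q →* Q) :
    Equivalence (Cohq (fun x y : Q => x * y) (fun x : Q => x⁻¹) (fun s x => aq s x)) := by
  constructor
  · intro b
    exact ⟨1, fun s => by simp⟩
  · rintro b b' ⟨x, hx⟩
    refine ⟨x⁻¹, fun s => ?_⟩
    rw [hx s]
    simp only [map_inv, map_mul]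
    group
  · rintro b b' b'' ⟨x, hx⟩ ⟨y, hy⟩
    refine ⟨x * y, fun s => ?_⟩
    rw [hy s, hx s]
    simp only [map_mul, mul_inv_rev]
    group

theorem cohq_of_quot_eq {Q : Type} [Group Q] [TopologicalSpace Q] (aq : G → Q →* Q)
    {b b' : Z1q (fun x y : Q => x * y) (fun s x => aq s x)}
    (h : Quot.mk (Cohq (fun x y : Q => x * y) (fun x : Q => x⁻¹) (fun s x => aq s x)) b =
      Quot.mk _ b') :
    Cohq (fun x y : Q => x * y) (fun x : Q => x⁻¹) (fun s x => aq s x) b b' :=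
  ((cohq_equivalence aq).eqvGen_iff).mp (Quot.eqvGen_exact h)


theorem mk_eq_mk_of_le {M M' : Subgroup A} (hle : M ≤ M') {x y : A}
    (h : (QuotientGroup.mk x : A ⧸ M) = QuotientGroup.mk y) :
    (QuotientGroup.mk x : A ⧸ M') = QuotientGroup.mk y :=
  QuotientGroup.eq.mpr (hle (QuotientGroup.eq.mp h))

theorem mk_inj (x y : A) {R : Type} (N : R → Subgroup A)
    (hNinter : (⋂ r, ((N r) : Set A)) = {1})
    (h : ∀ r, (QuotientGroup.mk x : A ⧸ N r) = QuotientGroup.mk y) : x = y := by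
  have hx : x⁻¹ * y ∈ ⋂ r, ((N r) : Set A) :=
    Set.mem_iInter.mpr fun r => QuotientGroup.eq.mp (h r)
  rw [hNinter, Set.mem_singleton_iff] at hx
  exact inv_mul_eq_one.mp hx

/-- The reduction of a cocycle to a quotient. -/
def redc (M : Subgroup A) [M.Normal] (ac : G → A → A)
    (hdist : ∀ (s : G) (x y : A), ac s (x * y) = ac s x * ac s y)
    (hmem : ∀ (s : G), ∀ x ∈ M, ac s x ∈ M) (a : Z1cts ac) :
    Z1q (fun x y : A ⧸ M => x * y) (fun s x => qac M ac hdist hmem s x) := by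
  refine ⟨fun s => QuotientGroup.mk (a.val s), continuous_quot_mk.comp a.2.1, fun s t => ?_⟩
  show (QuotientGroup.mk (a.val (s * t)) : A ⧸ M) =
    QuotientGroup.mk (a.val s) * qac M ac hdist hmem s (QuotientGroup.mk (a.val t))
  rw [a.2.2 s t, qac_mk, QuotientGroup.mk_mul]

theorem redc_twist (M : Subgroup A) [M.Normal] (ac : G → A → A)
    (hac : Continuous fun p : G × A => ac p.1 p.2)
    (hdist : ∀ (s : G) (x y : A), ac s (x * y) = ac s x * ac s y)
    (hcomp : ∀ (s t : G) (x : A), ac (s * t) x = ac s (ac t x))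
    (hmem : ∀ (s : G), ∀ x ∈ M, ac s x ∈ M) (a : Z1cts ac) (x : A) :
    Cohq (fun x y : A ⧸ M => x * y) (fun x : A ⧸ M => x⁻¹) (fun s x => qac M ac hdist hmem s x)
      (redc M ac hdist hmem a) (redc M ac hdist hmem (twist ac hac hdist hcomp a x)) := by
  refine ⟨QuotientGroup.mk x, fun s => ?_⟩
  show (QuotientGroup.mk (x⁻¹ * a.val s * ac s x) : A ⧸ M) =
    (QuotientGroup.mk x)⁻¹ * (QuotientGroup.mk (a.val s) * qac M ac hdist hmem s (QuotientGroup.mk x))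
  rw [qac_mk, QuotientGroup.mk_mul, QuotientGroup.mk_mul, QuotientGroup.mk_inv, mul_assoc]

theorem isClosed_cts {G A : Type} [TopologicalSpace G] [TopologicalSpace A]
    [CompactSpace A] [T2Space A]
    (hec : EvenlyContinuousSet {f : G → A | Continuous f}) :
    IsClosed {f : G → A | Continuous f} := by
  refine isClosed_of_closure_subset ?_
  intro f hf
  show Continuous f
  rw [continuous_iff_continuousAt]
  intro b
  rw [ContinuousAt, Filter.tendsto_def]
  intro U hU
  obtain ⟨U', hU'nhds, hU'closed, hU'sub⟩ := exists_mem_nhds_isClosed_subset hU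
  obtain ⟨V, hV, W, hW, hEC⟩ := hec b (f b) U' hU'nhds
  have key : ∀ v ∈ V, f v ∈ U' := by
    intro v hv
    rw [← hU'closed.closure_eq]
    rw [mem_closure_iff_nhds]
    intro O hO
    have hT : ((fun g : G → A => g b) ⁻¹' W ∩ (fun g : G → A => g v) ⁻¹' O) ∈ nhds f :=
      Filter.inter_mem ((continuous_apply b).continuousAt.preimage_mem_nhds hW)
        ((continuous_apply v).continuousAt.preimage_mem_nhds hO)
    obtain ⟨g, ⟨hgb, hgv⟩, hgC⟩ := mem_closure_iff_nhds.mp hf _ hT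
    exact ⟨g v, hgv, hEC g hgC hgb v hv⟩
  exact Filter.mem_of_superset hV fun v hv => hU'sub (key v hv)

theorem isHomeomorph_of_bij_closed {X Y : Type} [TopologicalSpace X] [TopologicalSpace Y]
    {f : X → Y} (hc : Continuous f) (hb : Function.Bijective f) (hcl : IsClosedMap f) :
    IsHomeomorph f := by
  refine ⟨hc, ?_, hb⟩
  intro U hU
  have h1 : IsClosed (f '' Uᶜ) := hcl _ hU.isClosed_compl
  rw [Set.image_compl_eq hb] at h1
  simpa using h1.isOpen_compl

theorem isHomeomorph_of_compact {X Y : Type} [TopologicalSpace X] [TopologicalSpace Y]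
    [CompactSpace X] [T2Space Y] {f : X → Y} (hc : Continuous f)
    (hb : Function.Bijective f) : IsHomeomorph f :=
  isHomeomorph_of_bij_closed hc hb (hc.isClosedEmbedding hb.1).isClosedMap

theorem mk_coh_form (M : Subgroup A) [M.Normal] (ac : G → A → A)
    (hdist : ∀ (s : G) (x y : A), ac s (x * y) = ac s x * ac s y)
    (hmem : ∀ (s : G), ∀ x ∈ M, ac s x ∈ M) (s : G) (x y : A) :
    (QuotientGroup.mk x)⁻¹ *
      (QuotientGroup.mk y * qac M ac hdist hmem s (QuotientGroup.mk x)) =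
      (QuotientGroup.mk (x⁻¹ * (y * ac s x)) : A ⧸ M) := by
  rw [qac_mk, ← QuotientGroup.mk_mul, ← QuotientGroup.mk_inv, ← QuotientGroup.mk_mul]

theorem isClosed_of_subsingleton {X : Type} [TopologicalSpace X] [Subsingleton X]
    (s : Set X) : IsClosed s := by
  rcases s.eq_empty_or_nonempty with h | ⟨x, hx⟩
  · simp [h]
  · have : s = Set.univ := Set.eq_univ_iff_forall.mpr fun y => Subsingleton.elim x y ▸ hx
    simp [this]

end Stmt13

/-- Let `G` be a topological group, `A` a profinite `G`-group and
`{N_r}_{r∈R}` a family of closed characteristic subgroups of `A` with `⋂ N_r = 1`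
and `N_r ⊆ N_t` for `r ≥ t`; put `A_r = A/N_r` (quotient topology, induced group
structure and `G`-action).  Then each `A_r` is a profinite `G`-group, the natural
map `A → lim_r A_r` is an isomorphism of topological groups commuting with the
`G`-actions, and `Θ : H¹_cts(G,A)_po → lim_r H¹_cts(G,A_r)_po` is a continuous
bijection, a homeomorphism when `G` is compact Hausdorff and `A` is evenly
continuous with respect to `G`. -/
theorem stmt_13
    {G : Type} [Group G] [TopologicalSpace G] [IsTopologicalGroup G]
    {A : Type} [Group A] [TopologicalSpace A] [IsTopologicalGroup A]
    [CompactSpace A] [T2Space A] [TotallyDisconnectedSpace A]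
    (ac : G → A → A)
    (hac : Continuous fun p : G × A => ac p.1 p.2)
    (hone : ∀ x : A, ac 1 x = x)
    (hcomp : ∀ (s t : G) (x : A), ac (s * t) x = ac s (ac t x))
    (hdist : ∀ (s : G) (x y : A), ac s (x * y) = ac s x * ac s y)
    {R : Type} [PartialOrder R] [IsDirected R (· ≤ ·)]
    (N : R → Subgroup A)
    (hNclosed : ∀ r, IsClosed (N r : Set A))
    (hNchar : ∀ r (ψ : A ≃* A), Continuous ψ → Continuous ψ.symm →
      ∀ x ∈ N r, ψ x ∈ N r)
    (hNinter : (⋂ r, (N r : Set A)) = {1})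
    (hNmono : ∀ (r t : R), t ≤ r → N r ≤ N t) :
    ∃ (mul : ∀ r, A ⧸ N r → A ⧸ N r → A ⧸ N r)
      (inv : ∀ r, A ⧸ N r → A ⧸ N r)
      (acq : ∀ r, G → A ⧸ N r → A ⧸ N r),
      -- the quotient structure is the one induced from `A`
      (∀ r (x y : A), mul r (QuotientGroup.mk x) (QuotientGroup.mk y) =
        QuotientGroup.mk (x * y)) ∧
      (∀ r (x : A), inv r (QuotientGroup.mk x) = QuotientGroup.mk x⁻¹) ∧
      (∀ r (s : G) (x : A), acq r s (QuotientGroup.mk x) =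
        QuotientGroup.mk (ac s x)) ∧
      -- each `A_r = A/N_r` is a profinite `G`-group
      (∀ r, CompactSpace (A ⧸ N r) ∧ T2Space (A ⧸ N r) ∧
        TotallyDisconnectedSpace (A ⧸ N r) ∧
        Continuous (fun p : (A ⧸ N r) × (A ⧸ N r) => mul r p.1 p.2) ∧
        Continuous (inv r) ∧
        Continuous (fun p : G × (A ⧸ N r) => acq r p.1 p.2) ∧
        (∀ (s : G) (x y : A ⧸ N r), acq r s (mul r x y) =
          mul r (acq r s x) (acq r s y)) ∧
        (∀ x : A ⧸ N r, acq r 1 x = x) ∧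
        (∀ (s t : G) (x : A ⧸ N r), acq r (s * t) x = acq r s (acq r t x))) ∧
      -- the natural map `A → lim_r A_r` is an isomorphism of topological groups
      -- commuting with the `G`-actions
      (∃ Φ : A → {h : ∀ r, A ⧸ N r // ∀ (r t : R) (hle : t ≤ r) (x : A),
            h r = QuotientGroup.mk x → h t = QuotientGroup.mk x},
        (∀ (x : A) (r : R), (Φ x).val r = QuotientGroup.mk x) ∧
        Function.Bijective Φ ∧ IsHomeomorph Φ ∧
        (∀ (x y : A) (r : R), (Φ (x * y)).val r =
          mul r ((Φ x).val r) ((Φ y).val r)) ∧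
        (∀ (s : G) (x : A) (r : R), (Φ (ac s x)).val r = acq r s ((Φ x).val r))) ∧
      -- the induced map `Θ : H¹_cts(G,A)_po → lim_r H¹_cts(G,A_r)_po`
      (∃ Θ : Quot (Cohomologous ac) →
          {h : ∀ r, Quot (Cohq (mul r) (inv r) (acq r)) //
            ∀ (r t : R) (hle : t ≤ r) (b : Z1q (mul r) (acq r)),
              h r = Quot.mk _ b →
              ∃ c : Z1q (mul t) (acq t),
                (∀ (s : G) (x : A), b.val s = QuotientGroup.mk x →
                  c.val s = QuotientGroup.mk x) ∧
                h t = Quot.mk _ c},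
        -- `Θ` is given by `[a] ↦ ([φ_r ∘ a])_r`
        (∀ (a : Z1cts ac) (r : R), ∃ c : Z1q (mul r) (acq r),
          (∀ s : G, c.val s = QuotientGroup.mk (a.val s)) ∧
          (Θ (Quot.mk _ a)).val r = Quot.mk _ c) ∧
        Continuous Θ ∧
        Function.Bijective Θ ∧
        (CompactSpace G → T2Space G →
          EvenlyContinuousSet {f : G → A | Continuous f} → IsHomeomorph Θ)) := by
  haveI hNorm : ∀ r, (N r).Normal := fun r =>
    Stmt13.normal_of_char (fun ψ hψ hψ' x hx => hNchar r ψ hψ hψ' x hx)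
  have hmem : ∀ r (s : G), ∀ x ∈ N r, ac s x ∈ N r := fun r s x hx =>
    Stmt13.mem_of_char ac hac hdist hone hcomp (fun ψ hψ hψ' y hy => hNchar r ψ hψ hψ' y hy) s x hx
  haveI hT2 : ∀ r, T2Space (A ⧸ N r) := fun r => Stmt13.quotT2 (N r) (hNclosed r)
  haveI hTS : ∀ r, TotallySeparatedSpace (A ⧸ N r) := fun r =>
    Stmt13.quotTotSep (N r) (hNclosed r)
  refine ⟨fun r (x y : A ⧸ N r) => x * y, fun r (x : A ⧸ N r) => x⁻¹,
    fun r s x => Stmt13.qac (N r) ac hdist (hmem r) s x,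
    fun r x y => (QuotientGroup.mk_mul (N r) x y).symm,
    fun r x => (QuotientGroup.mk_inv (N r) x).symm,
    fun r s x => Stmt13.qac_mk (N r) ac hdist (hmem r) s x,
    ?_, ?_, ?_⟩
  · -- profiniteness of the quotients
    intro r
    refine ⟨inferInstance, hT2 r, inferInstance, continuous_mul, continuous_inv,
      Stmt13.qac_cont (N r) ac hac hdist (hmem r),
      fun s x y => map_mul (Stmt13.qac (N r) ac hdist (hmem r) s) x y, ?_, ?_⟩
    · intro x
      obtain ⟨y, rfl⟩ := QuotientGroup.mk_surjective x
      simp only [Stmt13.qac_mk, hone]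
    · intro s t x
      obtain ⟨y, rfl⟩ := QuotientGroup.mk_surjective x
      simp only [Stmt13.qac_mk, hcomp]
  · -- the inverse limit isomorphism Φ
    let Φ0 : A → {h : ∀ r, A ⧸ N r // ∀ (r t : R) (_ : t ≤ r) (x : A),
        h r = QuotientGroup.mk x → h t = QuotientGroup.mk x} := fun x =>
      ⟨fun r => QuotientGroup.mk x, fun r t hle y hy =>
        Stmt13.mk_eq_mk_of_le (hNmono r t hle) hy⟩
    have hbij : Function.Bijective Φ0 := by
      constructor
      · intro x y hxy
        exact Stmt13.mk_inj x y N hNinter fun r => congrFun (congrArg Subtype.val hxy) r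
      · intro h
        set S : R → Set A := fun r => {x : A | (QuotientGroup.mk x : A ⧸ N r) = h.val r}
          with hS
        have hC : ∀ r, IsClosed (S r) :=
          fun r => isClosed_eq QuotientGroup.continuous_mk continuous_const
        have hne : ∀ r, (S r).Nonempty := fun r => by
          obtain ⟨x, hx⟩ := QuotientGroup.mk_surjective (h.val r); exact ⟨x, hx⟩
        have hmono : ∀ (r t : R), t ≤ r → S r ⊆ S t := fun r t hle x hx =>
          (h.prop r t hle x hx.symm).symm
        obtain ⟨x, hx⟩ := Stmt13.iInterNonempty S hC hne hmono
        exact ⟨x, Subtype.ext (funext fun r => Set.mem_iInter.mp hx r)⟩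
    have hcont : Continuous Φ0 :=
      Continuous.subtype_mk (continuous_pi fun r => continuous_quot_mk) _
    exact ⟨Φ0, fun x r => rfl, hbij, Stmt13.isHomeomorph_of_compact hcont hbij,
      fun x y r => QuotientGroup.mk_mul (N r) x y,
      fun s x r => (Stmt13.qac_mk (N r) ac hdist (hmem r) s x).symm⟩
  · -- Θ
    have hsub : ∀ (a : Z1cts ac) (r t : R), t ≤ r →
        ∀ b : Z1q (fun x y : A ⧸ N r => x * y)
          (fun s x => Stmt13.qac (N r) ac hdist (hmem r) s x),
        Quot.mk (Cohq (fun x y : A ⧸ N r => x * y) (fun x : A ⧸ N r => x⁻¹)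
            (fun s x => Stmt13.qac (N r) ac hdist (hmem r) s x))
            (Stmt13.redc (N r) ac hdist (hmem r) a) = Quot.mk _ b →
        ∃ c : Z1q (fun x y : A ⧸ N t => x * y)
          (fun s x => Stmt13.qac (N t) ac hdist (hmem t) s x),
          (∀ (s : G) (y : A), b.val s = QuotientGroup.mk y →
             c.val s = QuotientGroup.mk y) ∧
          Quot.mk (Cohq (fun x y : A ⧸ N t => x * y) (fun x : A ⧸ N t => x⁻¹)
            (fun s x => Stmt13.qac (N t) ac hdist (hmem t) s x))
            (Stmt13.redc (N t) ac hdist (hmem t) a) = Quot.mk _ c := by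
      intro a r t hle b hbq
      obtain ⟨xbar, hx⟩ := Stmt13.cohq_of_quot_eq (Stmt13.qac (N r) ac hdist (hmem r)) hbq
      obtain ⟨x, rfl⟩ := QuotientGroup.mk_surjective xbar
      refine ⟨Stmt13.redc (N t) ac hdist (hmem t) (Stmt13.twist ac hac hdist hcomp a x), ?_,
        Quot.sound (Stmt13.redc_twist (N t) ac hac hdist hcomp (hmem t) a x)⟩
      intro s y hy
      have h1 : b.val s = QuotientGroup.mk (x⁻¹ * (a.val s * ac s x)) :=
        (hx s).trans (Stmt13.mk_coh_form (N r) ac hdist (hmem r) s x (a.val s))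
      have h2 : (QuotientGroup.mk (x⁻¹ * (a.val s * ac s x)) : A ⧸ N t) = QuotientGroup.mk y :=
        Stmt13.mk_eq_mk_of_le (hNmono r t hle) (h1.symm.trans hy)
      show (QuotientGroup.mk (x⁻¹ * a.val s * ac s x) : A ⧸ N t) = QuotientGroup.mk y
      rw [mul_assoc]
      exact h2
    let TGT : Type := {h : ∀ r, Quot (Cohq (fun x y : A ⧸ N r => x * y)
        (fun x : A ⧸ N r => x⁻¹) (fun s x => Stmt13.qac (N r) ac hdist (hmem r) s x)) //
      ∀ (r t : R) (hle : t ≤ r) (b : Z1q (fun x y : A ⧸ N r => x * y)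
          (fun s x => Stmt13.qac (N r) ac hdist (hmem r) s x)),
        h r = Quot.mk _ b →
        ∃ c : Z1q (fun x y : A ⧸ N t => x * y)
            (fun s x => Stmt13.qac (N t) ac hdist (hmem t) s x),
          (∀ (s : G) (x : A), b.val s = QuotientGroup.mk x →
            c.val s = QuotientGroup.mk x) ∧
          h t = Quot.mk _ c}
    let ΘF : Z1cts ac → TGT := fun a =>
      ⟨fun r => Quot.mk (Cohq (fun x y : A ⧸ N r => x * y) (fun x : A ⧸ N r => x⁻¹)
          (fun s x => Stmt13.qac (N r) ac hdist (hmem r) s x))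
          (Stmt13.redc (N r) ac hdist (hmem r) a),
        fun r t hle b hbq => hsub a r t hle b hbq⟩
    have wd : ∀ a a' : Z1cts ac, Cohomologous ac a a' → ΘF a = ΘF a' := by
      rintro a a' ⟨x, hx⟩
      have ha' : a' = Stmt13.twist ac hac hdist hcomp a x := Subtype.ext (funext hx)
      rw [ha']
      refine Subtype.ext (funext fun r => ?_)
      exact Quot.sound (Stmt13.redc_twist (N r) ac hac hdist hcomp (hmem r) a x)
    have hinjΘ : Function.Injective (Quot.lift ΘF wd) := by
      intro q q' hqq
      obtain ⟨a, rfl⟩ := Quot.exists_rep q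
      obtain ⟨a', rfl⟩ := Quot.exists_rep q'
      have hr : ∀ r, Quot.mk (Cohq (fun x y : A ⧸ N r => x * y) (fun x : A ⧸ N r => x⁻¹)
          (fun s x => Stmt13.qac (N r) ac hdist (hmem r) s x))
          (Stmt13.redc (N r) ac hdist (hmem r) a) =
          Quot.mk _ (Stmt13.redc (N r) ac hdist (hmem r) a') := fun r =>
        congrFun (congrArg Subtype.val hqq) r
      let X : R → Set A := fun r => ⋂ s : G, {x : A |
        (QuotientGroup.mk (a'.val s) : A ⧸ N r) =
          QuotientGroup.mk (x⁻¹ * (a.val s * ac s x))}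
      have hXcl : ∀ r, IsClosed (X r) := fun r => isClosed_iInter fun s =>
        isClosed_eq continuous_const (continuous_quot_mk.comp
          (continuous_inv.mul (continuous_const.mul (Stmt13.acContR ac hac s))))
      have hXne : ∀ r, (X r).Nonempty := by
        intro r
        obtain ⟨xb, hxb⟩ := Stmt13.cohq_of_quot_eq
          (Stmt13.qac (N r) ac hdist (hmem r)) (hr r)
        obtain ⟨x, rfl⟩ := QuotientGroup.mk_surjective xb
        refine ⟨x, Set.mem_iInter.mpr fun s => ?_⟩
        exact (hxb s).trans (Stmt13.mk_coh_form (N r) ac hdist (hmem r) s x (a.val s))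
      have hXmono : ∀ (r t : R), t ≤ r → X r ⊆ X t := by
        intro r t hle x hx
        exact Set.mem_iInter.mpr fun s =>
          Stmt13.mk_eq_mk_of_le (hNmono r t hle) (Set.mem_iInter.mp hx s)
      obtain ⟨x, hx⟩ := Stmt13.iInterNonempty X hXcl hXne hXmono
      refine Quot.sound ⟨x, fun s => ?_⟩
      have he : a'.val s = x⁻¹ * (a.val s * ac s x) :=
        Stmt13.mk_inj _ _ N hNinter fun r => Set.mem_iInter.mp (Set.mem_iInter.mp hx r) s
      rw [he, mul_assoc]
    have hsurjΘ : Function.Surjective (Quot.lift ΘF wd) := by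
      intro h
      have hrep : ∀ r, ∃ b : Z1q (fun x y : A ⧸ N r => x * y)
          (fun s x => Stmt13.qac (N r) ac hdist (hmem r) s x),
          h.val r = Quot.mk _ b := by
        intro r
        obtain ⟨b, hbq⟩ := Quot.exists_rep (h.val r)
        exact ⟨b, hbq.symm⟩
      choose b hb using hrep
      let K : R → Set (G → A) := fun r => Prod.snd '' (⋂ s : G,
        {p : A × (G → A) | (QuotientGroup.mk (p.2 s) : A ⧸ N r) =
          (QuotientGroup.mk p.1)⁻¹ * ((b r).val s *
            Stmt13.qac (N r) ac hdist (hmem r) s (QuotientGroup.mk p.1))})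
      have hKcl : ∀ r, IsClosed (K r) := by
        intro r
        have hTcl : IsClosed (⋂ s : G,
            {p : A × (G → A) | (QuotientGroup.mk (p.2 s) : A ⧸ N r) =
              (QuotientGroup.mk p.1)⁻¹ * ((b r).val s *
                Stmt13.qac (N r) ac hdist (hmem r) s (QuotientGroup.mk p.1))}) := by
          refine isClosed_iInter fun s => isClosed_eq
            (QuotientGroup.continuous_mk.comp ((continuous_apply s).comp continuous_snd)) ?_
          have hqc : Continuous (Stmt13.qac (N r) ac hdist (hmem r) s) :=
            (Stmt13.qac_cont (N r) ac hac hdist (hmem r)).comp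
              (continuous_const.prodMk continuous_id)
          have hmkf : Continuous fun p : A × (G → A) => (QuotientGroup.mk p.1 : A ⧸ N r) :=
            (continuous_quot_mk : Continuous (QuotientGroup.mk : A → A ⧸ N r)).comp
              continuous_fst
          exact (continuous_inv.comp hmkf).mul (continuous_const.mul (hqc.comp hmkf))
        exact (hTcl.isCompact.image continuous_snd).isClosed
      have hKne : ∀ r, (K r).Nonempty := by
        intro r
        choose g hg using fun s => QuotientGroup.mk_surjective ((b r).val s)
        refine ⟨g, ⟨(1, g), Set.mem_iInter.mpr fun s => ?_, rfl⟩⟩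
        show (QuotientGroup.mk (g s) : A ⧸ N r) = _
        rw [hg s]
        simp
      have hKmono : ∀ (r t : R), t ≤ r → K r ⊆ K t := by
        intro r t hle f hf
        obtain ⟨⟨x, f'⟩, hp, hpf⟩ := hf
        have hpf' : f' = f := hpf
        rw [hpf'] at hp
        obtain ⟨c, hc1, hc2⟩ := h.prop r t hle (b r) (hb r)
        obtain ⟨zb, hz⟩ := Stmt13.cohq_of_quot_eq (Stmt13.qac (N t) ac hdist (hmem t))
          ((hb t).symm.trans hc2)
        obtain ⟨z, rfl⟩ := QuotientGroup.mk_surjective zb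
        refine ⟨(z * x, f), Set.mem_iInter.mpr fun s => ?_, rfl⟩
        obtain ⟨y, hy⟩ := QuotientGroup.mk_surjective ((b r).val s)
        have h1 : (QuotientGroup.mk (f s) : A ⧸ N r) =
            QuotientGroup.mk (x⁻¹ * (y * ac s x)) := by
          have := Set.mem_iInter.mp hp s
          rw [← hy] at this
          exact this.trans (Stmt13.mk_coh_form (N r) ac hdist (hmem r) s x y)
        have h2 : (QuotientGroup.mk (f s) : A ⧸ N t) =
            QuotientGroup.mk (x⁻¹ * (y * ac s x)) :=
          Stmt13.mk_eq_mk_of_le (hNmono r t hle) h1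
        have hbt : (b t).val s = QuotientGroup.mk z * (QuotientGroup.mk y *
            (Stmt13.qac (N t) ac hdist (hmem t) s (QuotientGroup.mk z))⁻¹) := by
          have h3 : (QuotientGroup.mk y : A ⧸ N t) = (QuotientGroup.mk z)⁻¹ *
              ((b t).val s * Stmt13.qac (N t) ac hdist (hmem t) s (QuotientGroup.mk z)) :=
            (hc1 s y hy.symm).symm.trans (hz s)
          rw [h3]
          group
        show (QuotientGroup.mk (f s) : A ⧸ N t) = (QuotientGroup.mk (z * x))⁻¹ *
          ((b t).val s * Stmt13.qac (N t) ac hdist (hmem t) s (QuotientGroup.mk (z * x)))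
        rw [h2, ← Stmt13.mk_coh_form (N t) ac hdist (hmem t) s x y, hbt,
          QuotientGroup.mk_mul (N t) z x]
        simp only [map_mul]
        group
      haveI : Nonempty (G → A) := ⟨fun _ => 1⟩
      obtain ⟨f, hf⟩ := Stmt13.iInterNonempty K hKcl hKne hKmono
      have hfK : ∀ r, ∃ x : A, ∀ s : G, (QuotientGroup.mk (f s) : A ⧸ N r) =
          (QuotientGroup.mk x)⁻¹ * ((b r).val s *
            Stmt13.qac (N r) ac hdist (hmem r) s (QuotientGroup.mk x)) := by
        intro r
        obtain ⟨⟨x, f'⟩, hp, hpf⟩ := Set.mem_iInter.mp hf r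
        have hpf' : f' = f := hpf
        rw [hpf'] at hp
        exact ⟨x, fun s => Set.mem_iInter.mp hp s⟩
      choose xw hxw using hfK
      have hmkf : ∀ r, Continuous fun s => (QuotientGroup.mk (f s) : A ⧸ N r) := by
        intro r
        have he : (fun s => (QuotientGroup.mk (f s) : A ⧸ N r)) = fun s =>
            (QuotientGroup.mk (xw r))⁻¹ * ((b r).val s *
              Stmt13.qac (N r) ac hdist (hmem r) s (QuotientGroup.mk (xw r))) :=
          funext (hxw r)
        rw [he]
        have hqc : Continuous fun s => Stmt13.qac (N r) ac hdist (hmem r) s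
            (QuotientGroup.mk (xw r)) :=
          (Stmt13.qac_cont (N r) ac hac hdist (hmem r)).comp
            (continuous_id.prodMk continuous_const)
        exact continuous_const.mul ((b r).2.1.mul hqc)
      have hfcont : Continuous f := by
        have hemb : Topology.IsClosedEmbedding
            (fun x : A => fun r => (QuotientGroup.mk x : A ⧸ N r)) :=
          Continuous.isClosedEmbedding (continuous_pi fun r => continuous_quot_mk)
            (fun x y hxy => Stmt13.mk_inj x y N hNinter fun r => congrFun hxy r)
        rw [hemb.isEmbedding.continuous_iff]
        exact continuous_pi fun r => hmkf r
      have haqcomp : ∀ (r : R) (s t : G) (q : A ⧸ N r),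
          Stmt13.qac (N r) ac hdist (hmem r) (s * t) q =
          Stmt13.qac (N r) ac hdist (hmem r) s
            (Stmt13.qac (N r) ac hdist (hmem r) t q) := by
        intro r s t q
        obtain ⟨u, rfl⟩ := QuotientGroup.mk_surjective q
        simp only [Stmt13.qac_mk, hcomp]
      have hfcoc : ∀ s t : G, f (s * t) = f s * ac s (f t) := by
        intro s t
        refine Stmt13.mk_inj _ _ N hNinter fun r => ?_
        rw [QuotientGroup.mk_mul, hxw r (s * t), hxw r s]
        have hft : (QuotientGroup.mk (ac s (f t)) : A ⧸ N r) =
            Stmt13.qac (N r) ac hdist (hmem r) s (QuotientGroup.mk (f t)) :=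
          (Stmt13.qac_mk (N r) ac hdist (hmem r) s (f t)).symm
        rw [hft, hxw r t, (b r).2.2 s t, haqcomp r s t]
        simp only [map_mul, map_inv]
        group
      refine ⟨Quot.mk _ ⟨f, hfcont, hfcoc⟩, ?_⟩
      refine Subtype.ext (funext fun r => ?_)
      show Quot.mk _ (Stmt13.redc (N r) ac hdist (hmem r) ⟨f, hfcont, hfcoc⟩) = h.val r
      rw [hb r]
      exact (Quot.sound ⟨QuotientGroup.mk (xw r), hxw r⟩).symm
    have hcontΘ : Continuous (Quot.lift ΘF wd) := by
      apply continuous_quot_lift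
      refine Continuous.subtype_mk (continuous_pi fun r => ?_) _
      refine Continuous.comp continuous_quot_mk (continuous_induced_rng.mpr ?_)
      show Continuous fun a : Z1cts ac => fun s : G => (QuotientGroup.mk (a.val s) : A ⧸ N r)
      exact continuous_pi fun s => continuous_quot_mk.comp
        ((continuous_apply s).comp continuous_subtype_val)
    have hhomeo : CompactSpace G → T2Space G →
        EvenlyContinuousSet {f : G → A | Continuous f} →
        IsHomeomorph (Quot.lift ΘF wd) := by
      intro hGc hGt2 hec
      haveI := hGc
      have hZcl2 : IsClosed {f : G → A | Continuous f ∧ ∀ s t : G, f (s * t) = f s * ac s (f t)} := by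
        have hseteq : {f : G → A | Continuous f ∧ ∀ s t : G, f (s * t) = f s * ac s (f t)} =
            {f : G → A | Continuous f} ∩ ⋂ s : G, ⋂ t : G,
              {f : G → A | f (s * t) = f s * ac s (f t)} := by
          ext f
          simp only [Set.mem_setOf_eq, Set.mem_inter_iff, Set.mem_iInter]
        rw [hseteq]
        exact (Stmt13.isClosed_cts hec).inter (isClosed_iInter fun s => isClosed_iInter fun t =>
          isClosed_eq (continuous_apply (s * t))
            ((continuous_apply s).mul ((Stmt13.acContR ac hac s).comp (continuous_apply t))))
      haveI hZc : CompactSpace (Z1cts ac) := isCompact_iff_compactSpace.mp hZcl2.isCompact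
      refine Stmt13.isHomeomorph_of_bij_closed hcontΘ ⟨hinjΘ, hsurjΘ⟩ ?_
      rcases isEmpty_or_nonempty R with hR | hR
      · haveI : Subsingleton TGT := ⟨fun h1 h2 => Subtype.ext (funext fun r => isEmptyElim r)⟩
        exact fun C hC => Stmt13.isClosed_of_subsingleton _
      intro C hC
      have hDcl : IsClosed (Quot.mk (Cohomologous ac) ⁻¹' C) := hC.preimage continuous_quot_mk
      have hDcpt : IsCompact (Quot.mk (Cohomologous ac) ⁻¹' C) := hDcl.isCompact
      have htwistcont : ∀ r : R, Continuous fun p : Z1cts ac × A =>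
          Stmt13.redc (N r) ac hdist (hmem r) (Stmt13.twist ac hac hdist hcomp p.1 p.2) := by
        intro r
        refine continuous_induced_rng.mpr ?_
        show Continuous fun p : Z1cts ac × A => fun s : G =>
          (QuotientGroup.mk (p.2⁻¹ * p.1.val s * ac s p.2) : A ⧸ N r)
        refine continuous_pi fun s => Continuous.comp continuous_quot_mk ?_
        exact (continuous_snd.inv.mul (((continuous_apply s).comp
          continuous_subtype_val).comp continuous_fst)).mul
          (hac.comp (continuous_const.prodMk continuous_snd))
      have hEcl : ∀ r, IsClosed ((fun a : Z1cts ac =>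
          Quot.mk (Cohq (fun x y : A ⧸ N r => x * y) (fun x : A ⧸ N r => x⁻¹)
            (fun s x => Stmt13.qac (N r) ac hdist (hmem r) s x))
            (Stmt13.redc (N r) ac hdist (hmem r) a)) '' (Quot.mk (Cohomologous ac) ⁻¹' C)) := by
        intro r
        rw [← (isQuotientMap_quot_mk).isClosed_preimage]
        have himg : Quot.mk (Cohq (fun x y : A ⧸ N r => x * y) (fun x : A ⧸ N r => x⁻¹)
              (fun s x => Stmt13.qac (N r) ac hdist (hmem r) s x)) ⁻¹'
              ((fun a : Z1cts ac => Quot.mk _ (Stmt13.redc (N r) ac hdist (hmem r) a)) ''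
                (Quot.mk (Cohomologous ac) ⁻¹' C)) =
            (fun p : Z1cts ac × A => Stmt13.redc (N r) ac hdist (hmem r)
              (Stmt13.twist ac hac hdist hcomp p.1 p.2)) ''
              ((Quot.mk (Cohomologous ac) ⁻¹' C) ×ˢ (Set.univ : Set A)) := by
          ext q
          constructor
          · rintro ⟨a, haD, hq⟩
            obtain ⟨xb, hx⟩ := Stmt13.cohq_of_quot_eq
              (Stmt13.qac (N r) ac hdist (hmem r)) hq
            obtain ⟨x, rfl⟩ := QuotientGroup.mk_surjective xb
            refine ⟨(a, x), ⟨haD, Set.mem_univ x⟩, ?_⟩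
            refine (Subtype.ext (funext fun s => ?_)).symm
            show q.val s = QuotientGroup.mk (x⁻¹ * a.val s * ac s x)
            have h1 : q.val s = QuotientGroup.mk (x⁻¹ * (a.val s * ac s x)) :=
              (hx s).trans (Stmt13.mk_coh_form (N r) ac hdist (hmem r) s x (a.val s))
            rw [h1, mul_assoc]
          · rintro ⟨⟨a, x⟩, ⟨haD, -⟩, rfl⟩
            exact ⟨a, haD,
              Quot.sound (Stmt13.redc_twist (N r) ac hac hdist hcomp (hmem r) a x)⟩
        rw [himg]
        exact ((hDcpt.prod isCompact_univ).image (htwistcont r)).isClosed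
      have himage : Quot.lift ΘF wd '' C = ⋂ r, {h' : TGT | h'.val r ∈
          (fun a : Z1cts ac => Quot.mk (Cohq (fun x y : A ⧸ N r => x * y)
            (fun x : A ⧸ N r => x⁻¹)
            (fun s x => Stmt13.qac (N r) ac hdist (hmem r) s x))
            (Stmt13.redc (N r) ac hdist (hmem r) a)) '' (Quot.mk (Cohomologous ac) ⁻¹' C)} := by
        apply Set.Subset.antisymm
        · rintro _ ⟨q, hqC, rfl⟩
          obtain ⟨a, rfl⟩ := Quot.exists_rep q
          exact Set.mem_iInter.mpr fun r => ⟨a, hqC, rfl⟩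
        · intro h' hmem'
          obtain ⟨q0, rfl⟩ := hsurjΘ h'
          obtain ⟨a0, rfl⟩ := Quot.exists_rep q0
          let M : R → Set (Z1cts ac × A) := fun r =>
            ((Quot.mk (Cohomologous ac) ⁻¹' C) ×ˢ (Set.univ : Set A)) ∩ ⋂ s : G,
              {p : Z1cts ac × A | (QuotientGroup.mk (a0.val s) : A ⧸ N r) =
                QuotientGroup.mk (p.2⁻¹ * (p.1.val s * ac s p.2))}
          have hMcl : ∀ r, IsClosed (M r) := by
            intro r
            refine (hDcl.prod isClosed_univ).inter (isClosed_iInter fun s =>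
              isClosed_eq continuous_const (Continuous.comp continuous_quot_mk ?_))
            exact continuous_snd.inv.mul ((((continuous_apply s).comp
              continuous_subtype_val).comp continuous_fst).mul
              (hac.comp (continuous_const.prodMk continuous_snd)))
          have hMne : ∀ r, (M r).Nonempty := by
            intro r
            obtain ⟨a1, ha1D, hq⟩ := Set.mem_iInter.mp hmem' r
            obtain ⟨xb, hx⟩ := Stmt13.cohq_of_quot_eq
              (Stmt13.qac (N r) ac hdist (hmem r)) hq
            obtain ⟨x, rfl⟩ := QuotientGroup.mk_surjective xb
            refine ⟨(a1, x), ⟨ha1D, Set.mem_univ x⟩, Set.mem_iInter.mpr fun s => ?_⟩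
            exact (hx s).trans (Stmt13.mk_coh_form (N r) ac hdist (hmem r) s x (a1.val s))
          have hMmono : ∀ (r t : R), t ≤ r → M r ⊆ M t := by
            intro r t hle p hp
            exact ⟨hp.1, Set.mem_iInter.mpr fun s =>
              Stmt13.mk_eq_mk_of_le (hNmono r t hle) (Set.mem_iInter.mp hp.2 s)⟩
          haveI : Nonempty (Z1cts ac × A) := ⟨(Stmt13.onecoc ac hdist, 1)⟩
          obtain ⟨⟨a1, x⟩, hmemM⟩ := Stmt13.iInterNonempty M hMcl hMne hMmono
          obtain ⟨r0⟩ := hR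
          have ha1D : Quot.mk (Cohomologous ac) a1 ∈ C :=
            (Set.mem_iInter.mp hmemM r0).1.1
          have he : ∀ s : G, a0.val s = x⁻¹ * a1.val s * ac s x := by
            intro s
            have := Stmt13.mk_inj (a0.val s) (x⁻¹ * (a1.val s * ac s x)) N hNinter
              fun r => Set.mem_iInter.mp (Set.mem_iInter.mp hmemM r).2 s
            rw [this, mul_assoc]
          have hco : Cohomologous ac a1 a0 := ⟨x, he⟩
          have : Quot.mk (Cohomologous ac) a0 ∈ C := Quot.sound hco ▸ ha1D
          exact ⟨Quot.mk (Cohomologous ac) a0, this, rfl⟩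
      rw [himage]
      exact isClosed_iInter fun r => (hEcl r).preimage
        ((continuous_apply r).comp continuous_subtype_val)
    exact ⟨Quot.lift ΘF wd, fun a r =>
      ⟨Stmt13.redc (N r) ac hdist (hmem r) a, fun s => rfl, rfl⟩,
      hcontΘ, ⟨hinjΘ, hsurjΘ⟩, hhomeo⟩
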